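/- Let X be a Banach space and h(t) = Σ_{k=0}^{p^{2N}−1} p^{N/2} 1_{B[k/p^N, p^{−N}]}(t) x_k with x_k ∈ X. Then the Bochner L² norm of its Fourier transform satisfies ‖𝓕h‖²_{L²(ℚ_p,X)} = ∫_{ℤ_p} ‖Σ_{k=0}^{p^{2N}−1} χ_p(k t / p^{2N}) x_k‖² dt. -/

import Mathlib

open MeasureTheory Metric Finset
open scoped ENNReal NNReal Classical

noncomputable def padicDigit {p : ℕ} [Fact p.Prime] (x : ℤ_[p]) (k : ℕ) : ℕ :=
  x.appr (k+1) / p^k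

noncomputable def padicTau {p : ℕ} [Fact p.Prime] (x : ℤ_[p]) : ℝ :=
  ∑' k : ℕ, (padicDigit x k : ℝ) / (p:ℝ)^(k+1)

noncomputable def padicFrac {p : ℕ} [Fact p.Prime] (x : ℚ_[p]) : ℚ :=
  if h : ‖x * (p:ℚ_[p])^((-x.valuation).toNat)‖ ≤ 1 then
    ((PadicInt.appr (⟨x * (p:ℚ_[p])^((-x.valuation).toNat), h⟩ : ℤ_[p]) ((-x.valuation).toNat) : ℚ)
      / (p:ℚ)^((-x.valuation).toNat))
  else 0

noncomputable def padicChar {p : ℕ} [Fact p.Prime] (x : ℚ_[p]) : ℂ :=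
  Complex.exp (2 * Real.pi * Complex.I * ((padicFrac x : ℚ) : ℂ))

def IsHilbertizable (X : Type*) [NormedAddCommGroup X] [NormedSpace ℂ X] : Prop :=
  ∃ (H : Type) (_ : NormedAddCommGroup H) (_ : InnerProductSpace ℂ H) (_ : CompleteSpace H),
    Nonempty (X ≃L[ℂ] H)

noncomputable def rademacherZp {p : ℕ} [Fact p.Prime] (i : ℕ) (t : ℤ_[p]) : ℝ :=
  Real.sign (Real.sin (2^i * Real.pi * padicTau t))

noncomputable def padicFourier {p : ℕ} [Fact p.Prime] [MeasurableSpace ℚ_[p]]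
    (μ : Measure ℚ_[p]) {X : Type*} [NormedAddCommGroup X] [NormedSpace ℂ X]
    (f : ℚ_[p] → X) : ℚ_[p] → X :=
  fun s => ∫ t, padicChar (s * t) • f t ∂μ

variable {p : ℕ} [Fact p.Prime]

lemma pR_pos : (0:ℝ) < p := by exact_mod_cast (Fact.out : p.Prime).pos
lemma pR_one_lt : (1:ℝ) < p := by exact_mod_cast (Fact.out : p.Prime).one_lt
lemma pQp_ne : (p:ℚ_[p]) ≠ 0 := by
  exact_mod_cast Nat.cast_ne_zero.mpr (Fact.out : p.Prime).ne_zero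

lemma padic_shift_norm_le (x : ℚ_[p]) : ‖x * (p:ℚ_[p])^((-x.valuation).toNat)‖ ≤ 1 := by
  rcases eq_or_ne x 0 with rfl | hx
  · simp
  · have hval : ‖x‖ = (p : ℝ) ^ (-x.valuation) := Padic.norm_eq_zpow_neg_valuation hx
    rw [norm_mul, hval, Padic.norm_p_pow,
      ← zpow_add₀ (ne_of_gt pR_pos)]
    refine zpow_le_one_of_nonpos₀ (le_of_lt pR_one_lt) ?_
    have := Int.self_le_toNat (-x.valuation)
    omega

lemma rat_int_of_norm_le_one {q : ℚ} (hq : ∃ (m : ℕ) (a : ℤ), q = a / p^m)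
    (h : ‖(q : ℚ_[p])‖ ≤ 1) : ∃ c : ℤ, q = c := by
  obtain ⟨m, a, rfl⟩ := hq
  have hpq : ((p:ℚ)) ≠ 0 := Nat.cast_ne_zero.mpr (Fact.out : p.Prime).ne_zero
  have hpm : ((p:ℚ))^m ≠ 0 := pow_ne_zero _ hpq
  have hcast : (((a : ℚ) / p^m : ℚ) : ℚ_[p]) = (a : ℚ_[p]) / (p:ℚ_[p])^m := by push_cast; ring
  have hnorm : ‖((a : ℚ_[p]))‖ ≤ (p:ℝ)^(-(m:ℤ)) := by
    have hdiv : (a : ℚ_[p]) = (((a:ℚ) / p^m : ℚ) : ℚ_[p]) * (p:ℚ_[p])^m := by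
      rw [hcast]; field_simp
      exact (mul_div_cancel_right₀ _ (pow_ne_zero _ pQp_ne)).symm
    rw [hdiv, norm_mul, norm_pow, Padic.norm_p]
    calc ‖(((a:ℚ) / p^m : ℚ) : ℚ_[p])‖ * ((p:ℝ)⁻¹)^m ≤ 1 * ((p:ℝ)⁻¹)^m := by
          gcongr
      _ = (p:ℝ)^(-(m:ℤ)) := by rw [one_mul, inv_pow, ← zpow_natCast, ← zpow_neg]
  rw [Padic.norm_int_le_pow_iff_dvd] at hnorm
  obtain ⟨c, hc⟩ := hnorm
  refine ⟨c, ?_⟩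
  rw [hc]; push_cast; field_simp

lemma padicFrac_form (x : ℚ_[p]) : ∃ (m : ℕ) (a : ℤ), padicFrac x = a / p^m := by
  rw [padicFrac, dif_pos (padic_shift_norm_le x)]
  refine ⟨(-x.valuation).toNat,
    (PadicInt.appr (⟨x * (p:ℚ_[p])^((-x.valuation).toNat), padic_shift_norm_le x⟩ : ℤ_[p])
      ((-x.valuation).toNat) : ℤ), by push_cast; ring⟩

lemma padicFrac_norm_sub (x : ℚ_[p]) : ‖x - ((padicFrac x : ℚ) : ℚ_[p])‖ ≤ 1 := by
  rw [padicFrac, dif_pos (padic_shift_norm_le x)]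
  set m := (-x.valuation).toNat with hm
  set z : ℤ_[p] := ⟨x * (p:ℚ_[p])^m, padic_shift_norm_le x⟩ with hz
  have hspec : ‖z - (z.appr m : ℤ_[p])‖ ≤ (p:ℝ)^(-(m:ℤ)) := by
    rw [PadicInt.norm_le_pow_iff_mem_span_pow]
    exact PadicInt.appr_spec m z
  have hcast : (((z.appr m : ℚ) / (p:ℚ)^m : ℚ) : ℚ_[p]) = (z.appr m : ℚ_[p]) / (p:ℚ_[p])^m := by
    push_cast; ring
  rw [hcast]
  have hx : x = (z : ℚ_[p]) / (p:ℚ_[p])^m := by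
    rw [hz]; field_simp
    exact (mul_div_cancel_right₀ _ (pow_ne_zero _ pQp_ne)).symm
  rw [hx, div_sub_div_same, norm_div, norm_pow, Padic.norm_p]
  have hnum : ‖(z:ℚ_[p]) - (z.appr m : ℚ_[p])‖ ≤ (p:ℝ)^(-(m:ℤ)) := by
    have : ((z - (z.appr m : ℤ_[p]) : ℤ_[p]) : ℚ_[p]) = (z:ℚ_[p]) - (z.appr m : ℚ_[p]) := by
      push_cast; ring
    rw [← this]; exact hspec
  calc ‖(z:ℚ_[p]) - (z.appr m : ℚ_[p])‖ / (p:ℝ)⁻¹^m ≤ (p:ℝ)^(-(m:ℤ)) / (p:ℝ)⁻¹^m := by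
        gcongr
    _ = 1 := by
        rw [inv_pow, ← zpow_natCast (p:ℝ), ← zpow_neg, div_eq_mul_inv, ← zpow_neg,
          ← zpow_add₀ (ne_of_gt pR_pos)]
        simp

lemma padicChar_eq_exp {x : ℚ_[p]} {q : ℚ} (hq : ∃ (m : ℕ) (a : ℤ), q = a / p^m)
    (hx : ‖x - (q:ℚ_[p])‖ ≤ 1) :
    padicChar x = Complex.exp (2 * Real.pi * Complex.I * (q:ℂ)) := by
  obtain ⟨c, hc⟩ : ∃ c : ℤ, padicFrac x - q = c := by
    apply rat_int_of_norm_le_one (p := p)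
    · obtain ⟨m, a, ha⟩ := padicFrac_form x
      obtain ⟨m', a', ha'⟩ := hq
      refine ⟨m + m', a * p^m' - a' * p^m, ?_⟩
      rw [ha, ha']
      have h1 : ((p:ℚ))^m ≠ 0 := pow_ne_zero _ (Nat.cast_ne_zero.mpr (Fact.out : p.Prime).ne_zero)
      have h2 : ((p:ℚ))^m' ≠ 0 := pow_ne_zero _ (Nat.cast_ne_zero.mpr (Fact.out : p.Prime).ne_zero)
      rw [div_sub_div _ _ h1 h2, pow_add]
      push_cast
      ring
    · have : ((padicFrac x - q : ℚ) : ℚ_[p]) =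
          (((padicFrac x : ℚ) : ℚ_[p]) - x) + (x - (q:ℚ_[p])) := by push_cast; ring
      rw [this]
      refine le_trans (Padic.nonarchimedean _ _) (max_le ?_ hx)
      rw [norm_sub_rev]; exact padicFrac_norm_sub x
  have : (padicFrac x : ℂ) = (q:ℂ) + (c:ℂ) := by
    have h2 : padicFrac x = q + (c:ℚ) := by linarith [sub_eq_iff_eq_add.mp hc]
    rw [h2]; push_cast; ring
  rw [padicChar, this]
  rw [mul_add, Complex.exp_add]
  have : 2 * (Real.pi:ℂ) * Complex.I * (c:ℂ) = (c:ℂ) * (2 * (Real.pi:ℂ) * Complex.I) := by ring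
  rw [this, Complex.exp_int_mul_two_pi_mul_I]
  ring

lemma padicChar_of_norm_le_one {x : ℚ_[p]} (h : ‖x‖ ≤ 1) : padicChar x = 1 := by
  have := padicChar_eq_exp (x := x) (q := 0) ⟨0, 0, by norm_num⟩ (by simpa using h)
  simpa using this

lemma padicChar_add (x y : ℚ_[p]) : padicChar (x + y) = padicChar x * padicChar y := by
  have hq : ∃ (m : ℕ) (a : ℤ), padicFrac x + padicFrac y = a / p^m := by
    obtain ⟨m, a, ha⟩ := padicFrac_form x
    obtain ⟨m', a', ha'⟩ := padicFrac_form y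
    have h1 : ((p:ℚ))^m ≠ 0 := pow_ne_zero _ (Nat.cast_ne_zero.mpr (Fact.out : p.Prime).ne_zero)
    have h2 : ((p:ℚ))^m' ≠ 0 := pow_ne_zero _ (Nat.cast_ne_zero.mpr (Fact.out : p.Prime).ne_zero)
    refine ⟨m + m', a * p^m' + a' * p^m, ?_⟩
    rw [ha, ha', div_add_div _ _ h1 h2, pow_add]
    push_cast; ring
  have hx : ‖(x + y) - ((padicFrac x + padicFrac y : ℚ) : ℚ_[p])‖ ≤ 1 := by
    have : (x + y) - ((padicFrac x + padicFrac y : ℚ) : ℚ_[p]) =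
        (x - ((padicFrac x : ℚ) : ℚ_[p])) + (y - ((padicFrac y : ℚ) : ℚ_[p])) := by
      push_cast; ring
    rw [this]
    exact le_trans (Padic.nonarchimedean _ _)
      (max_le (padicFrac_norm_sub x) (padicFrac_norm_sub y))
  rw [padicChar_eq_exp hq hx, padicChar, padicChar, ← Complex.exp_add]
  push_cast
  ring_nf

lemma padicChar_eq_of_norm_sub_le {x y : ℚ_[p]} (h : ‖x - y‖ ≤ 1) :
    padicChar x = padicChar y := by
  have : x = y + (x - y) := by ring
  rw [this, padicChar_add, padicChar_of_norm_le_one h, mul_one]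

lemma continuous_padicChar : Continuous (padicChar (p := p)) := by
  rw [continuous_iff_continuousAt]
  intro x₀
  have : padicChar (p := p) =ᶠ[nhds x₀] fun _ => padicChar x₀ := by
    refine Filter.eventuallyEq_of_mem (Metric.ball_mem_nhds x₀ one_pos) (fun x hx => ?_)
    exact padicChar_eq_of_norm_sub_le (le_of_lt (by simpa [dist_eq_norm] using hx))
  exact this.continuousAt

lemma norm_padicChar (x : ℚ_[p]) : ‖padicChar x‖ = 1 := by
  rw [padicChar, Complex.norm_exp]
  have : (2 * (Real.pi:ℂ) * Complex.I * ((padicFrac x : ℚ):ℂ)).re = 0 := by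
    simp [Complex.mul_re, Complex.mul_im]
  rw [this, Real.exp_zero]

lemma padicChar_p_inv_ne_one : padicChar ((p:ℚ_[p])⁻¹) ≠ 1 := by
  have hq : ∃ (m : ℕ) (a : ℤ), (1 / p : ℚ) = a / p^m := ⟨1, 1, by norm_num⟩
  have hx : ‖(p:ℚ_[p])⁻¹ - ((1/p : ℚ) : ℚ_[p])‖ ≤ 1 := by
    have : ((1/p : ℚ) : ℚ_[p]) = (p:ℚ_[p])⁻¹ := by push_cast; simp
    rw [this]; simp
  rw [padicChar_eq_exp hq hx]
  intro hcon
  rw [Complex.exp_eq_one_iff] at hcon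
  obtain ⟨n, hn⟩ := hcon
  have h2pi : (2 * (Real.pi:ℂ) * Complex.I) ≠ 0 := by
    simp [Real.pi_ne_zero, Complex.I_ne_zero]
  have : ((1/p : ℚ) : ℂ) = (n : ℂ) := by
    refine mul_left_cancel₀ h2pi ?_
    linear_combination hn
  have : (1/p : ℚ) = (n:ℚ) := by exact_mod_cast this
  have hp1 : (1:ℚ) < p := by exact_mod_cast (Fact.out : p.Prime).one_lt
  rcases le_or_gt n 0 with h | h
  · have : (0:ℚ) < 1/p := by positivity
    have : (n:ℚ) ≤ 0 := by exact_mod_cast h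
    linarith
  · have : (1:ℚ) ≤ n := by exact_mod_cast h
    have : (1/p : ℚ) < 1 := by rw [div_lt_one (by linarith)]; linarith
    linarith

section meas
variable [MeasurableSpace ℚ_[p]] [BorelSpace ℚ_[p]]
variable (μ : Measure ℚ_[p]) [μ.IsAddHaarMeasure]

instance : TopologicalSpace.SeparableSpace ℚ_[p] := by
  refine ⟨⟨Set.range ((↑) : ℚ → ℚ_[p]), Set.countable_range _, ?_⟩⟩
  rw [dense_iff_closure_eq]
  ext x
  simp only [Set.mem_univ, iff_true, Metric.mem_closure_iff]
  intro ε hε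
  obtain ⟨r, hr⟩ := Padic.rat_dense (p := p) x hε
  exact ⟨r, ⟨r, rfl⟩, by rwa [dist_eq_norm]⟩

instance : SecondCountableTopology ℚ_[p] :=
  UniformSpace.secondCountable_of_separable _

lemma meas_ball_translate (c : ℚ_[p]) (r : ℝ) :
    μ (closedBall c r) = μ (closedBall 0 r) := by
  have := measure_preimage_add μ c (closedBall c r)
  rw [← this]
  congr 1
  ext x
  simp [dist_eq_norm]

omit [MeasurableSpace ℚ_[p]] [BorelSpace ℚ_[p]] in
lemma ball_decomp (n : ℤ) :
    closedBall (0:ℚ_[p]) ((p:ℝ)^n) =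
      ⋃ j ∈ Finset.range p, closedBall ((j:ℚ_[p]) * (p:ℚ_[p])^(-n)) ((p:ℝ)^(n-1)) := by
  have hpR : (0:ℝ) < p := pR_pos
  have hpne : (p:ℚ_[p]) ≠ 0 := pQp_ne
  ext x
  simp only [Set.mem_iUnion, Finset.mem_range, mem_closedBall, dist_eq_norm, exists_prop]
  constructor
  · intro hx
    rw [sub_zero] at hx
    have hw : ‖x * (p:ℚ_[p])^n‖ ≤ 1 := by
      rw [norm_mul, Padic.norm_p_zpow]
      calc ‖x‖ * (p:ℝ)^(-n) ≤ (p:ℝ)^n * (p:ℝ)^(-n) := by gcongr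
        _ = 1 := by rw [← zpow_add₀ (ne_of_gt hpR)]; simp
    set w : ℤ_[p] := ⟨x * (p:ℚ_[p])^n, hw⟩ with hwdef
    refine ⟨w.appr 1, by simpa using w.appr_lt 1, ?_⟩
    have hspec : ‖(w:ℚ_[p]) - (w.appr 1 : ℚ_[p])‖ ≤ (p:ℝ)^(-(1:ℕ):ℤ) := by
      have h1 : ‖w - (w.appr 1 : ℤ_[p])‖ ≤ (p:ℝ)^(-(1:ℕ):ℤ) := by
        rw [PadicInt.norm_le_pow_iff_mem_span_pow]
        exact w.appr_spec 1
      have h2 : ((w - (w.appr 1 : ℤ_[p]) : ℤ_[p]) : ℚ_[p]) = (w:ℚ_[p]) - (w.appr 1 : ℚ_[p]) := by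
        push_cast; ring
      rw [← h2]; exact h1
    have hxw : x - (w.appr 1 : ℚ_[p]) * (p:ℚ_[p])^(-n)
        = ((w:ℚ_[p]) - (w.appr 1 : ℚ_[p])) * (p:ℚ_[p])^(-n) := by
      rw [hwdef]
      push_cast
      rw [sub_mul, mul_assoc, ← zpow_add₀ hpne]
      simp
    rw [hxw, norm_mul, Padic.norm_p_zpow, neg_neg]
    calc ‖(w:ℚ_[p]) - (w.appr 1 : ℚ_[p])‖ * (p:ℝ)^n ≤ (p:ℝ)^(-(1:ℕ):ℤ) * (p:ℝ)^n := by gcongr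
      _ = (p:ℝ)^(n-1) := by rw [← zpow_add₀ (ne_of_gt hpR)]; ring_nf
  · rintro ⟨j, hj, hx⟩
    rw [sub_zero]
    have h1 : ‖(j:ℚ_[p]) * (p:ℚ_[p])^(-n)‖ ≤ (p:ℝ)^n := by
      rw [norm_mul, Padic.norm_p_zpow, neg_neg]
      have : ‖((j:ℤ) : ℚ_[p])‖ ≤ 1 := Padic.norm_int_le_one _
      calc ‖(j:ℚ_[p])‖ * (p:ℝ)^n ≤ 1 * (p:ℝ)^n := by
            gcongr
            exact_mod_cast this
        _ = (p:ℝ)^n := one_mul _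
    have : x = (x - (j:ℚ_[p]) * (p:ℚ_[p])^(-n)) + (j:ℚ_[p]) * (p:ℚ_[p])^(-n) := by ring
    rw [this]
    refine le_trans (Padic.nonarchimedean _ _) (max_le (le_trans hx ?_) h1)
    exact zpow_le_zpow_right₀ (le_of_lt pR_one_lt) (by omega)

omit [MeasurableSpace ℚ_[p]] [BorelSpace ℚ_[p]] in
lemma ball_disj (n : ℤ) : Set.PairwiseDisjoint ↑(Finset.range p)
    (fun j : ℕ => closedBall ((j:ℚ_[p]) * (p:ℚ_[p])^(-n)) ((p:ℝ)^(n-1))) := by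
  intro j hj j' hj' hne
  simp only [Finset.coe_range, Set.mem_Iio] at hj hj'
  refine Set.disjoint_left.mpr (fun y hy hy' => ?_)
  simp only [mem_closedBall, dist_eq_norm] at hy hy'
  have hcc : ‖((j:ℚ_[p]) - (j':ℚ_[p])) * (p:ℚ_[p])^(-n)‖ ≤ (p:ℝ)^(n-1) := by
    have : ((j:ℚ_[p]) - (j':ℚ_[p])) * (p:ℚ_[p])^(-n)
        = ((j:ℚ_[p]) * (p:ℚ_[p])^(-n) - y) + (y - (j':ℚ_[p]) * (p:ℚ_[p])^(-n)) := by ring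
    rw [this]
    refine le_trans (Padic.nonarchimedean _ _) (max_le ?_ hy')
    rwa [norm_sub_rev]
  have hunit : ‖(j:ℚ_[p]) - (j':ℚ_[p])‖ = 1 := by
    have hcast : ((((j:ℤ) - (j':ℤ)) : ℤ) : ℚ_[p]) = (j:ℚ_[p]) - (j':ℚ_[p]) := by push_cast; ring
    have hle : ‖(((j:ℤ) - (j':ℤ) : ℤ) : ℚ_[p])‖ ≤ 1 := Padic.norm_int_le_one _
    have hnd : ¬ ((p:ℤ) ∣ ((j:ℤ) - (j':ℤ))) := by
      intro hd
      have : ((j:ℤ) - (j':ℤ)) = 0 := by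
        refine Int.eq_zero_of_dvd_of_natAbs_lt_natAbs hd ?_
        have : ((j:ℤ) - (j':ℤ)).natAbs < p := by
          rcases le_or_gt j j' with h | h
          · rw [show (j:ℤ) - (j':ℤ) = -((j' - j : ℕ) : ℤ) by push_cast; omega, Int.natAbs_neg,
              Int.natAbs_natCast]
            omega
          · rw [show (j:ℤ) - (j':ℤ) = ((j - j' : ℕ) : ℤ) by push_cast; omega, Int.natAbs_natCast]
            omega
        simpa using this
      have : j = j' := by omega
      exact hne this
    have hlt := (Padic.norm_intCast_lt_one_iff (p := p) (k := (j:ℤ) - (j':ℤ))).not.mpr ?_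
    · rw [hcast] at hle hlt
      push_neg at hlt
      linarith
    · exact hnd
  rw [norm_mul, hunit, one_mul, Padic.norm_p_zpow, neg_neg] at hcc
  have : (p:ℝ)^(n-1) < (p:ℝ)^n := zpow_lt_zpow_right₀ pR_one_lt (by omega)
  linarith

lemma meas_ball_step (n : ℤ) :
    μ (closedBall (0:ℚ_[p]) ((p:ℝ)^n)) = p * μ (closedBall (0:ℚ_[p]) ((p:ℝ)^(n-1))) := by
  rw [ball_decomp (p := p) n]
  rw [measure_biUnion_finset (ball_disj (p := p) n)
    (fun j _ => measurableSet_closedBall)]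
  have : ∀ j ∈ Finset.range p,
      μ (closedBall ((j:ℚ_[p]) * (p:ℚ_[p])^(-n)) ((p:ℝ)^(n-1)))
        = μ (closedBall (0:ℚ_[p]) ((p:ℝ)^(n-1))) := fun j _ => meas_ball_translate μ _ _
  rw [Finset.sum_congr rfl this, Finset.sum_const, Finset.card_range, nsmul_eq_mul]

lemma meas_ball_zpow (hμ : μ (closedBall (0:ℚ_[p]) 1) = 1) (n : ℤ) :
    μ (closedBall (0:ℚ_[p]) ((p:ℝ)^n)) = (p:ℝ≥0∞)^n := by
  have hp0 : (p:ℝ≥0∞) ≠ 0 := by exact_mod_cast (Fact.out : p.Prime).ne_zero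
  have hpt : (p:ℝ≥0∞) ≠ ∞ := ENNReal.natCast_ne_top p
  induction n using Int.induction_on with
  | zero => simpa using hμ
  | succ k ih =>
      have := meas_ball_step (p := p) μ (k+1)
      rw [show ((k:ℤ)+1-1) = k by ring] at this
      rw [this, ih, ENNReal.zpow_add hp0 hpt, zpow_one, mul_comm]
  | pred k ih =>
      have := meas_ball_step (p := p) μ (-k)
      rw [ih] at this
      have hstep : (p:ℝ≥0∞)^(-(k:ℤ)) = (p:ℝ≥0∞) * (p:ℝ≥0∞)^(-(k:ℤ)-1) := by
        have h2 := ENNReal.zpow_add hp0 hpt 1 (-(k:ℤ)-1)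
        rw [zpow_one] at h2
        rw [← h2]
        congr 1
        omega
      rw [hstep] at this
      have h2 := (ENNReal.mul_right_inj hp0 hpt).mp this
      exact h2.symm

lemma map_scale (hμ : μ (closedBall (0:ℚ_[p]) 1) = 1) (N : ℕ) :
    Measure.map (fun u : ℚ_[p] => ((p:ℚ_[p])^N)⁻¹ * u) μ = ((p:ℝ≥0∞)^(-(N:ℤ))) • μ := by
  have hpne : (p:ℚ_[p]) ≠ 0 := pQp_ne
  set c : ℚ_[p] := ((p:ℚ_[p])^N)⁻¹ with hc
  have hc0 : c ≠ 0 := inv_ne_zero (pow_ne_zero _ hpne)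
  let e : ℚ_[p] ≃+ ℚ_[p] :=
    { toFun := fun u => c * u
      invFun := fun u => c⁻¹ * u
      left_inv := fun u => by field_simp
      right_inv := fun u => by field_simp
      map_add' := mul_add c }
  have hcont : Continuous (fun u : ℚ_[p] => c * u) := continuous_const.mul (f := fun _ => c) continuous_id
  have hcont' : Continuous (fun u : ℚ_[p] => c⁻¹ * u) := continuous_const.mul (f := fun _ => c⁻¹) continuous_id
  have hmap : Measure.map (fun u : ℚ_[p] => c * u) μ = Measure.map (⇑e) μ := rfl
  haveI : (Measure.map (⇑e) μ).IsAddHaarMeasure := e.isAddHaarMeasure_map μ hcont hcont'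
  have factor := Measure.isAddLeftInvariant_eq_smul (Measure.map (⇑e) μ) μ
  have hnc : ‖c‖ = (p:ℝ)^(N:ℤ) := by
    rw [hc, norm_inv, norm_pow, Padic.norm_p, ← inv_pow, inv_inv, zpow_natCast]
  have hpre : (fun u : ℚ_[p] => c * u) ⁻¹' closedBall 0 1 = closedBall 0 ((p:ℝ)^(-(N:ℤ))) := by
    ext u
    simp only [Set.mem_preimage, mem_closedBall, dist_eq_norm, sub_zero]
    rw [norm_mul, hnc, zpow_neg, ← one_div, le_div_iff₀ (zpow_pos pR_pos _), mul_comm]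
  have heval : (Measure.map (⇑e) μ) (closedBall 0 1) = (p:ℝ≥0∞)^(-(N:ℤ)) := by
    rw [← hmap, Measure.map_apply hcont.measurable measurableSet_closedBall, hpre]
    exact meas_ball_zpow μ hμ _
  rw [factor] at heval
  rw [Measure.smul_apply, hμ, ENNReal.smul_def, smul_eq_mul, mul_one] at heval
  rw [hmap, factor, ENNReal.smul_def, heval]

end meas

section four
variable [MeasurableSpace ℚ_[p]] [BorelSpace ℚ_[p]]
variable (μ : Measure ℚ_[p]) [μ.IsAddHaarMeasure]
variable {X : Type*} [NormedAddCommGroup X] [NormedSpace ℂ X] [CompleteSpace X]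

omit [MeasurableSpace ℚ_[p]] [BorelSpace ℚ_[p]] [μ.IsAddHaarMeasure] in
lemma toReal_p_zpow_neg (N : ℕ) : ((p:ℝ≥0∞)^(-(N:ℤ))).toReal = (p:ℝ)^(-(N:ℤ)) := by
  have hp0 : (p:ℝ≥0∞) ≠ 0 := by exact_mod_cast (Fact.out : p.Prime).ne_zero
  rw [ENNReal.zpow_neg, zpow_natCast, zpow_neg, zpow_natCast,
    ENNReal.toReal_inv, ENNReal.toReal_pow]
  simp

-- the set-integral of the character over a small ball, |s| ≤ p^N case
lemma Ival_in (hμ : μ (closedBall (0:ℚ_[p]) 1) = 1) (N : ℕ) (c s : ℚ_[p])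
    (hs : ‖s‖ ≤ (p:ℝ)^(N:ℤ)) :
    ∫ t in closedBall c ((p:ℝ)^(-(N:ℤ))), padicChar (s * t) ∂μ
      = ((p:ℝ)^(-(N:ℤ))) • padicChar (s * c) := by
  have hcongr : ∀ t ∈ closedBall c ((p:ℝ)^(-(N:ℤ))),
      padicChar (s * t) = padicChar (s * c) := by
    intro t ht
    simp only [mem_closedBall, dist_eq_norm] at ht
    apply padicChar_eq_of_norm_sub_le
    rw [← mul_sub, norm_mul]
    calc ‖s‖ * ‖t - c‖ ≤ (p:ℝ)^(N:ℤ) * (p:ℝ)^(-(N:ℤ)) := by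
          gcongr
      _ = 1 := by rw [← zpow_add₀ (ne_of_gt pR_pos)]; simp
  rw [setIntegral_congr_fun measurableSet_closedBall hcongr, setIntegral_const, Measure.real,
    meas_ball_translate μ, meas_ball_zpow μ hμ]
  rw [toReal_p_zpow_neg]

lemma Ival_out (N : ℕ) (c s : ℚ_[p]) (hs : ¬ (‖s‖ ≤ (p:ℝ)^(N:ℤ))) :
    ∫ t in closedBall c ((p:ℝ)^(-(N:ℤ))), padicChar (s * t) ∂μ = 0 := by
  push_neg at hs
  have hs0 : s ≠ 0 := by
    intro h
    rw [h, norm_zero] at hs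
    exact absurd hs (not_lt.mpr (le_of_lt (zpow_pos pR_pos _)))
  have hpne : (p:ℚ_[p]) ≠ 0 := pQp_ne
  set u₀ : ℚ_[p] := ((p:ℚ_[p]) * s)⁻¹ with hu₀
  have hsu₀ : s * u₀ = (p:ℚ_[p])⁻¹ := by
    rw [hu₀, mul_inv]
    field_simp
  have hnu₀ : ‖u₀‖ ≤ (p:ℝ)^(-(N:ℤ)) := by
    have hv : ‖s‖ = (p:ℝ)^(-s.valuation) := Padic.norm_eq_zpow_neg_valuation hs0
    have hNv : (N:ℤ) < -s.valuation := by
      rw [hv] at hs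
      exact (zpow_lt_zpow_iff_right₀ pR_one_lt).mp hs
    rw [hu₀, norm_inv, norm_mul, Padic.norm_p, hv, ← zpow_neg_one (p:ℝ),
      ← zpow_add₀ (ne_of_gt pR_pos), ← zpow_neg]
    exact zpow_le_zpow_right₀ (le_of_lt pR_one_lt) (by omega)
  set g : ℚ_[p] → ℂ := Set.indicator (closedBall c ((p:ℝ)^(-(N:ℤ)))) (fun t => padicChar (s * t))
    with hg
  have hshift : ∀ t, g (t + u₀) = padicChar (s * u₀) * g t := by
    intro t
    have hmem : t + u₀ ∈ closedBall c ((p:ℝ)^(-(N:ℤ))) ↔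
        t ∈ closedBall c ((p:ℝ)^(-(N:ℤ))) := by
      simp only [mem_closedBall, dist_eq_norm]
      constructor
      · intro h
        have : t - c = (t + u₀ - c) + (-u₀) := by ring
        rw [this]
        exact le_trans (Padic.nonarchimedean _ _) (max_le h (by rwa [norm_neg]))
      · intro h
        have : t + u₀ - c = (t - c) + u₀ := by ring
        rw [this]
        exact le_trans (Padic.nonarchimedean _ _) (max_le h hnu₀)
    by_cases ht : t ∈ closedBall c ((p:ℝ)^(-(N:ℤ)))
    · rw [hg]
      simp only [Set.indicator_of_mem (hmem.mpr ht), Set.indicator_of_mem ht]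
      rw [mul_add, padicChar_add, mul_comm]
    · rw [hg]
      simp only [Set.indicator_of_notMem (fun h => ht (hmem.mp h)),
        Set.indicator_of_notMem ht, mul_zero]
  have hinv : ∫ t, g (t + u₀) ∂μ = ∫ t, g t ∂μ := integral_add_right_eq_self g u₀
  have h2 : ∫ t, g (t + u₀) ∂μ = padicChar (s * u₀) * ∫ t, g t ∂μ := by
    simp_rw [hshift]
    exact integral_const_mul _ _
  have this : ∫ t, g t ∂μ = padicChar (s * u₀) * ∫ t, g t ∂μ := (h2.symm.trans hinv).symm
  have hne : padicChar (s * u₀) ≠ 1 := by rw [hsu₀]; exact padicChar_p_inv_ne_one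
  have hfac : (padicChar (s * u₀) - 1) * ∫ t, g t ∂μ = 0 := by linear_combination -this
  have hzero : ∫ t, g t ∂μ = 0 := by
    rcases mul_eq_zero.mp hfac with h1 | h2
    · exact absurd (sub_eq_zero.mp h1) hne
    · exact h2
  rw [← integral_indicator measurableSet_closedBall]
  exact hzero

lemma fourier_formula (hμ : μ (closedBall (0:ℚ_[p]) 1) = 1) (N : ℕ) (x : ℕ → X) (s : ℚ_[p]) :
    padicFourier μ (fun t => ∑ k ∈ Finset.range (p^(2*N)),
        (p:ℝ)^((N:ℝ)/2) • Set.indicator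
          (Metric.closedBall ((k:ℚ_[p]) / (p:ℚ_[p])^N) ((p:ℝ)^(-(N:ℤ)))) (fun _ => x k) t) s
      = Set.indicator (closedBall (0:ℚ_[p]) ((p:ℝ)^(N:ℤ)))
          (fun s => ∑ k ∈ Finset.range (p^(2*N)),
            ((p:ℝ)^((N:ℝ)/2) * (p:ℝ)^(-(N:ℤ))) • (padicChar (s * ((k:ℚ_[p]) / (p:ℚ_[p])^N)) • x k)) s := by
  rw [padicFourier]
  have hint : ∀ t : ℚ_[p], padicChar (s*t) • (∑ k ∈ Finset.range (p^(2*N)),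
        (p:ℝ)^((N:ℝ)/2) • Set.indicator
          (Metric.closedBall ((k:ℚ_[p]) / (p:ℚ_[p])^N) ((p:ℝ)^(-(N:ℤ)))) (fun _ => x k) t)
      = ∑ k ∈ Finset.range (p^(2*N)),
          Set.indicator (Metric.closedBall ((k:ℚ_[p]) / (p:ℚ_[p])^N) ((p:ℝ)^(-(N:ℤ))))
            (fun t => padicChar (s*t) • ((p:ℝ)^((N:ℝ)/2) • x k)) t := by
    intro t
    rw [Finset.smul_sum]
    refine Finset.sum_congr rfl (fun k _ => ?_)
    by_cases ht : t ∈ Metric.closedBall ((k:ℚ_[p]) / (p:ℚ_[p])^N) ((p:ℝ)^(-(N:ℤ)))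
    · rw [Set.indicator_of_mem ht, Set.indicator_of_mem ht]
    · rw [Set.indicator_of_notMem ht, Set.indicator_of_notMem ht, smul_zero, smul_zero]
  simp_rw [hint]
  rw [integral_finset_sum _ (fun k _ => ?_)]
  swap
  · refine MeasureTheory.IntegrableOn.integrable_indicator ?_ measurableSet_closedBall
    refine ContinuousOn.integrableOn_compact (isCompact_closedBall _ _) ?_
    exact ((continuous_padicChar.comp (continuous_const.mul continuous_id)).smul
      continuous_const).continuousOn
  have hterm : ∀ k : ℕ, ∫ t, Set.indicator
        (Metric.closedBall ((k:ℚ_[p]) / (p:ℚ_[p])^N) ((p:ℝ)^(-(N:ℤ))))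
        (fun t => padicChar (s*t) • ((p:ℝ)^((N:ℝ)/2) • x k)) t ∂μ
      = (∫ t in Metric.closedBall ((k:ℚ_[p]) / (p:ℚ_[p])^N) ((p:ℝ)^(-(N:ℤ))),
          padicChar (s*t) ∂μ) • ((p:ℝ)^((N:ℝ)/2) • x k) := by
    intro k
    rw [integral_indicator measurableSet_closedBall, integral_smul_const]
  simp_rw [hterm]
  by_cases hs : ‖s‖ ≤ (p:ℝ)^(N:ℤ)
  · have hmem : s ∈ closedBall (0:ℚ_[p]) ((p:ℝ)^(N:ℤ)) := by
      simpa [mem_closedBall, dist_eq_norm] using hs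
    rw [Set.indicator_of_mem hmem]
    refine Finset.sum_congr rfl (fun k _ => ?_)
    rw [Ival_in μ hμ N _ s hs]
    rw [smul_assoc, smul_comm (padicChar _) ((p:ℝ)^((N:ℝ)/2)) (x k), smul_smul, mul_comm,
      mul_smul]
  · have hmem : s ∉ closedBall (0:ℚ_[p]) ((p:ℝ)^(N:ℤ)) := by
      simpa [mem_closedBall, dist_eq_norm] using hs
    rw [Set.indicator_of_notMem hmem]
    refine Finset.sum_eq_zero (fun k _ => ?_)
    rw [Ival_out μ N _ s hs, zero_smul]

end four

theorem stmt14 {p : ℕ} [Fact p.Prime] [MeasurableSpace ℚ_[p]] [BorelSpace ℚ_[p]]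
    (μ : Measure ℚ_[p]) [μ.IsAddHaarMeasure] (hμ : μ (Metric.closedBall 0 1) = 1)
    {X : Type*} [NormedAddCommGroup X] [NormedSpace ℂ X] [CompleteSpace X]
    (N : ℕ) (hN : 1 ≤ N) (x : ℕ → X) :
    ∫ s, ‖padicFourier μ (fun t => ∑ k ∈ Finset.range (p^(2*N)),
        (p:ℝ)^((N:ℝ)/2) • Set.indicator
          (Metric.closedBall ((k:ℚ_[p]) / (p:ℚ_[p])^N) ((p:ℝ)^(-(N:ℤ)))) (fun _ => x k) t) s‖^2 ∂μ
      = ∫ t in Metric.closedBall (0:ℚ_[p]) 1,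
          ‖∑ k ∈ Finset.range (p^(2*N)), padicChar ((k:ℚ_[p]) * t / (p:ℚ_[p])^(2*N)) • x k‖^2 ∂μ := by
  classical
  have hp0 : (0:ℝ) < p := pR_pos
  set w : ℚ_[p] → X := fun s => ∑ k ∈ Finset.range (p^(2*N)),
      padicChar (s * ((k:ℚ_[p]) / (p:ℚ_[p])^N)) • x k with hw
  have hwcont : Continuous w := by
    refine continuous_finset_sum _ (fun k _ => ?_)
    exact ((continuous_padicChar.comp (continuous_mul_right _))).smul continuous_const
  set C : ℝ := (p:ℝ)^((N:ℝ)/2) * (p:ℝ)^(-(N:ℤ)) with hC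
  set g : ℚ_[p] → X := fun t => ∑ k ∈ Finset.range (p^(2*N)),
      padicChar ((k:ℚ_[p]) * t / (p:ℚ_[p])^(2*N)) • x k with hg
  have hgcont : Continuous g := by
    refine continuous_finset_sum _ (fun k _ => ?_)
    refine (continuous_padicChar.comp ?_).smul continuous_const
    exact (continuous_const.mul continuous_id).div_const _
  have hstep1 : ∀ s, ‖padicFourier μ (fun t => ∑ k ∈ Finset.range (p^(2*N)),
        (p:ℝ)^((N:ℝ)/2) • Set.indicator
          (Metric.closedBall ((k:ℚ_[p]) / (p:ℚ_[p])^N) ((p:ℝ)^(-(N:ℤ)))) (fun _ => x k) t) s‖^2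
      = Set.indicator (closedBall (0:ℚ_[p]) ((p:ℝ)^(N:ℤ))) (fun s => C^2 * ‖w s‖^2) s := by
    intro s
    rw [fourier_formula μ hμ N x s]
    by_cases hs : s ∈ closedBall (0:ℚ_[p]) ((p:ℝ)^(N:ℤ))
    · rw [Set.indicator_of_mem hs, Set.indicator_of_mem hs]
      have hsum : ∑ k ∈ Finset.range (p^(2*N)),
          C • (padicChar (s * ((k:ℚ_[p]) / (p:ℚ_[p])^N)) • x k) = C • w s := by
        rw [hw, Finset.smul_sum]
      rw [hsum, norm_smul, mul_pow, Real.norm_eq_abs, sq_abs]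
    · rw [Set.indicator_of_notMem hs, Set.indicator_of_notMem hs, norm_zero]
      ring
  simp_rw [hstep1]
  set f : ℚ_[p] → ℝ :=
    Set.indicator (closedBall (0:ℚ_[p]) ((p:ℝ)^(N:ℤ))) (fun s => C^2 * ‖w s‖^2) with hf
  have hfm : AEStronglyMeasurable f
      (Measure.map (fun u : ℚ_[p] => ((p:ℚ_[p])^N)⁻¹ * u) μ) :=
    ((continuous_const.mul ((hwcont.norm).pow 2)).stronglyMeasurable.indicator
      measurableSet_closedBall).aestronglyMeasurable
  have hT : Measurable fun u : ℚ_[p] => ((p:ℚ_[p])^N)⁻¹ * u :=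
    (continuous_const.mul (f := fun _ => ((p:ℚ_[p])^N)⁻¹) continuous_id).measurable
  have hchg : ∫ u, f (((p:ℚ_[p])^N)⁻¹ * u) ∂μ = ((p:ℝ)^(-(N:ℤ))) * ∫ s, f s ∂μ := by
    rw [← integral_map hT.aemeasurable hfm, map_scale μ hμ N, integral_smul_measure,
      toReal_p_zpow_neg, smul_eq_mul]
  have hcomp : ∀ u, f (((p:ℚ_[p])^N)⁻¹ * u)
      = Set.indicator (closedBall (0:ℚ_[p]) 1) (fun t => C^2 * ‖g t‖^2) u := by
    intro u
    have hiff : ((p:ℚ_[p])^N)⁻¹ * u ∈ closedBall (0:ℚ_[p]) ((p:ℝ)^(N:ℤ)) ↔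
        u ∈ closedBall (0:ℚ_[p]) 1 := by
      simp only [mem_closedBall, dist_eq_norm, sub_zero]
      rw [norm_mul, norm_inv, norm_pow, Padic.norm_p, inv_pow, inv_inv,
        ← zpow_natCast (p:ℝ) N, mul_comm]
      exact mul_le_iff_le_one_left (zpow_pos hp0 _)
    have harg : ∀ k : ℕ, ((p:ℚ_[p])^N)⁻¹ * u * ((k:ℚ_[p]) / (p:ℚ_[p])^N)
        = (k:ℚ_[p]) * u / (p:ℚ_[p])^(2*N) := by
      intro k
      rw [two_mul, pow_add]
      have : ((p:ℚ_[p])^N) ≠ 0 := pow_ne_zero _ pQp_ne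
      field_simp
    have hwg : w (((p:ℚ_[p])^N)⁻¹ * u) = g u := by
      rw [hw, hg]
      refine Finset.sum_congr rfl (fun k _ => ?_)
      rw [harg k]
    by_cases hu : u ∈ closedBall (0:ℚ_[p]) 1
    · rw [hf, Set.indicator_of_mem (hiff.mpr hu), Set.indicator_of_mem hu, hwg]
    · rw [hf, Set.indicator_of_notMem (fun h => hu (hiff.mp h)), Set.indicator_of_notMem hu]
  have hPC : (p:ℝ)^(N:ℤ) * C^2 = 1 := by
    rw [hC, mul_pow]
    have e1 : ((p:ℝ)^((N:ℝ)/2))^2 = (p:ℝ)^(N:ℤ) := by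
      rw [← Real.rpow_natCast ((p:ℝ)^((N:ℝ)/2)) 2, ← Real.rpow_mul hp0.le,
        show (N:ℝ)/2 * ((2:ℕ):ℝ) = ((N:ℕ):ℝ) by push_cast; ring,
        Real.rpow_natCast, zpow_natCast]
    have e2 : ((p:ℝ)^(-(N:ℤ)))^2 = (p:ℝ)^((-(N:ℤ))*2) := by
      rw [← zpow_natCast ((p:ℝ)^(-(N:ℤ))) 2, ← zpow_mul]
      norm_num
    rw [e1, e2, ← zpow_add₀ (ne_of_gt hp0), ← zpow_add₀ (ne_of_gt hp0)]
    rw [show (N:ℤ) + ((N:ℤ) + -(N:ℤ)*2) = 0 by ring, zpow_zero]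
  have hpull : ∫ u, Set.indicator (closedBall (0:ℚ_[p]) 1) (fun t => C^2 * ‖g t‖^2) u ∂μ
      = C^2 * ∫ u, Set.indicator (closedBall (0:ℚ_[p]) 1) (fun t => ‖g t‖^2) u ∂μ := by
    rw [← integral_const_mul]
    congr 1
    funext u
    by_cases hu : u ∈ closedBall (0:ℚ_[p]) 1
    · rw [Set.indicator_of_mem hu, Set.indicator_of_mem hu]
    · rw [Set.indicator_of_notMem hu, Set.indicator_of_notMem hu, mul_zero]
  calc ∫ s, f s ∂μ
      = (p:ℝ)^(N:ℤ) * ((p:ℝ)^(-(N:ℤ)) * ∫ s, f s ∂μ) := by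
        rw [← mul_assoc, ← zpow_add₀ (ne_of_gt hp0), add_neg_cancel, zpow_zero, one_mul]
    _ = (p:ℝ)^(N:ℤ) * ∫ u, f (((p:ℚ_[p])^N)⁻¹ * u) ∂μ := by rw [hchg]
    _ = (p:ℝ)^(N:ℤ) * (C^2 * ∫ u, Set.indicator (closedBall (0:ℚ_[p]) 1)
          (fun t => ‖g t‖^2) u ∂μ) := by
        simp_rw [hcomp]
        rw [hpull]
    _ = ∫ u, Set.indicator (closedBall (0:ℚ_[p]) 1) (fun t => ‖g t‖^2) u ∂μ := by
        rw [← mul_assoc, hPC, one_mul]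
    _ = ∫ t in closedBall (0:ℚ_[p]) 1, ‖g t‖^2 ∂μ :=
        integral_indicator measurableSet_closedBall
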